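/- For b ∈ (0,1), the functions y₁(x) = (b + x)((1−x)/(1+x))^{b/2} and y₂(x) = (b − x)((1+x)/(1−x))^{b/2} are solutions on (−1, 1) of the second-order linear ODE (1 − x²) y'' − 2x y' + (2 − b²/(1 − x²)) y = 0. -/

import Mathlib

lemma aux1 (c x : ℝ) (h1 : (0:ℝ) < 1 - x) (h2 : (0:ℝ) < 1 + x) :
    HasDerivAt (fun t : ℝ => ((1 - t) / (1 + t)) ^ c)
      ((-2 * c / (1 - x ^ 2)) * ((1 - x) / (1 + x)) ^ c) x := by
  have ha : HasDerivAt (fun t : ℝ => 1 - t) (-1) x := by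
    simpa using (hasDerivAt_const x (1:ℝ)).fun_sub (hasDerivAt_id x)
  have hb : HasDerivAt (fun t : ℝ => 1 + t) 1 x := by
    simpa using (hasDerivAt_const x (1:ℝ)).fun_add (hasDerivAt_id x)
  have hu : HasDerivAt (fun t : ℝ => (1 - t) / (1 + t))
      ((-1 * (1 + x) - (1 - x) * 1) / (1 + x) ^ 2) x := ha.div hb h2.ne'
  have hne : (1 - x) / (1 + x) ≠ 0 := (div_pos h1 h2).ne'
  have h := HasDerivAt.rpow_const (p := c) hu (Or.inl hne)
  convert h using 1
  rw [Real.rpow_sub_one hne]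
  have h12 : (1:ℝ) - x ^ 2 ≠ 0 := by nlinarith
  set q := ((1 - x) / (1 + x)) ^ c with hq
  field_simp
  ring

lemma keyODE (b a : ℝ) (ha : a = 1 ∨ a = -1) (g y : ℝ → ℝ)
    (hg : ∀ x ∈ Set.Ioo (-1:ℝ) 1, HasDerivAt g ((-(a * b) / (1 - x ^ 2)) * g x) x)
    (hy : ∀ x, y x = (b + a * x) * g x) :
    ∀ x ∈ Set.Ioo (-1:ℝ) 1,
      (1 - x ^ 2) * deriv (deriv y) x - 2 * x * deriv y x
        + (2 - b ^ 2 / (1 - x ^ 2)) * y x = 0 := by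
  set f : ℝ → ℝ := fun t => g t * (a - a * b * ((b + a * t) / (1 - t ^ 2))) with hf_def
  have hfd : ∀ t ∈ Set.Ioo (-1:ℝ) 1, HasDerivAt y (f t) t := by
    intro t ht
    have h1 : (0:ℝ) < 1 - t ^ 2 := by nlinarith [ht.1, ht.2]
    have hlin : HasDerivAt (fun s : ℝ => b + a * s) a t := by
      simpa using (hasDerivAt_const t b).fun_add ((hasDerivAt_id t).const_mul a)
    have hm := hlin.mul (hg t ht)
    have hyy : y = fun s => (b + a * s) * g s := funext hy
    rw [hyy]
    convert hm using 1
    all_goals try rfl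
    simp only [hf_def]
    field_simp
    ring
  intro x hx
  have h1 : (0:ℝ) < 1 - x ^ 2 := by nlinarith [hx.1, hx.2]
  have hlin : HasDerivAt (fun s : ℝ => b + a * s) a x := by
    simpa using (hasDerivAt_const x b).fun_add ((hasDerivAt_id x).const_mul a)
  have hden : HasDerivAt (fun s : ℝ => 1 - s ^ 2) (-(2 * x)) x := by
    simpa using (hasDerivAt_const x (1:ℝ)).fun_sub (hasDerivAt_pow 2 x : HasDerivAt (fun s : ℝ => s ^ 2) _ x)
  have hq := ((hlin.div hden h1.ne').const_mul (a * b)).const_sub a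
  have hfd' := (hg x hx).mul hq
  have hEq : deriv y =ᶠ[nhds x] f :=
    Filter.eventuallyEq_of_mem (isOpen_Ioo.mem_nhds hx) (fun t ht => (hfd t ht).deriv)
  have h2nd : deriv (deriv y) x
      = (-(a * b) / (1 - x ^ 2)) * g x * (a - a * b * ((b + a * x) / (1 - x ^ 2)))
        + g x * -(a * b * ((a * (1 - x ^ 2) - (b + a * x) * -(2 * x)) / (1 - x ^ 2) ^ 2)) := by
    rw [hEq.deriv_eq]
    exact hfd'.deriv
  have h1st : deriv y x = f x := (hfd x hx).deriv
  rw [h2nd, h1st, hy x, hf_def]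
  rcases ha with rfl | rfl <;> · field_simp; ring

theorem stmt_9 (b : ℝ) (hb : b ∈ Set.Ioo (0 : ℝ) 1)
    (y1 y2 : ℝ → ℝ)
    (hy1 : ∀ x, y1 x = (b + x) * ((1 - x) / (1 + x)) ^ (b / 2))
    (hy2 : ∀ x, y2 x = (b - x) * ((1 + x) / (1 - x)) ^ (b / 2)) :
    ∀ x ∈ Set.Ioo (-1 : ℝ) 1,
      ((1 - x ^ 2) * deriv (deriv y1) x - 2 * x * deriv y1 x
        + (2 - b ^ 2 / (1 - x ^ 2)) * y1 x = 0) ∧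
      ((1 - x ^ 2) * deriv (deriv y2) x - 2 * x * deriv y2 x
        + (2 - b ^ 2 / (1 - x ^ 2)) * y2 x = 0) := by
  intro x hx
  constructor
  · refine keyODE b 1 (Or.inl rfl) (fun t => ((1 - t) / (1 + t)) ^ (b / 2)) y1 ?_ ?_ x hx
    · intro t ht
      have h1 : (0:ℝ) < 1 - t := by linarith [ht.2]
      have h2 : (0:ℝ) < 1 + t := by linarith [ht.1]
      have h := aux1 (b / 2) t h1 h2
      convert h using 1
      ring
    · intro t; simp only [hy1]; ring
  · refine keyODE b (-1) (Or.inr rfl) (fun t => ((1 + t) / (1 - t)) ^ (b / 2)) y2 ?_ ?_ x hx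
    · intro t ht
      have h1 : (0:ℝ) < 1 - (-t) := by linarith [ht.1]
      have h2 : (0:ℝ) < 1 + (-t) := by linarith [ht.2]
      have hneg : HasDerivAt (fun s : ℝ => -s) (-1) t := by
        simpa using (hasDerivAt_id t).fun_neg
      have h := (aux1 (b / 2) (-t) h1 h2).comp t hneg
      have heq : ((fun t : ℝ => ((1 - t) / (1 + t)) ^ (b / 2)) ∘ fun s : ℝ => -s)
          = fun s : ℝ => ((1 + s) / (1 - s)) ^ (b / 2) := by
        funext s
        simp only [Function.comp_apply]
        congr 1
        ring
      rw [heq] at h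
      convert h using 1
      all_goals try rfl
      rw [show (1 - -t) / (1 + -t) = (1 + t) / (1 - t) by ring]
      ring_nf
    · intro t; simp only [hy2]; ring
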